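/- Let X₁ be an invertible d×d complex matrix, X₂ a d×d complex matrix, and S a d×d complex matrix satisfying X₁†S†SX₁ = X₁†SS†X₁. Then the 2d×2d block matrix ρ with blocks ρ₁₁ = X₁†X₁, ρ₁₂ = X₁†SX₁, ρ₂₁ = X₁†S†X₁, ρ₂₂ = X₁†S†SX₁ + X₂†X₂ is separable on ℂ²⊗ℂᵈ. -/

import Mathlib

open Matrix Kronecker Finset ComplexOrder

/-- 2x2 block matrix with n×n blocks, indexed by `Fin 2 × n`. -/
def blk {n : Type*} (A B C D : Matrix n n ℂ) :
    Matrix (Fin 2 × n) (Fin 2 × n) ℂ := fun p q =>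
  if p.1 = 0 then (if q.1 = 0 then A p.2 q.2 else B p.2 q.2)
  else (if q.1 = 0 then C p.2 q.2 else D p.2 q.2)

/-- Partial transpose on the first (qubit) factor. -/
def ptA {n : Type*} (ρ : Matrix (Fin 2 × n) (Fin 2 × n) ℂ) :
    Matrix (Fin 2 × n) (Fin 2 × n) ℂ := fun p q => ρ (q.1, p.2) (p.1, q.2)

/-- Separability of an (unnormalized) state on ℂ²⊗ℂⁿ. -/
def SepState {n : Type*} [Fintype n] (ρ : Matrix (Fin 2 × n) (Fin 2 × n) ℂ) : Prop :=
  ∃ (N : ℕ) (σ : Fin N → Matrix (Fin 2) (Fin 2) ℂ) (P : Fin N → Matrix n n ℂ),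
    (∀ i, (σ i).PosSemidef) ∧ (∀ i, (P i).PosSemidef) ∧ ρ = ∑ i, σ i ⊗ₖ P i

noncomputable section Aux

def sig (z : ℂ) : Matrix (Fin 2) (Fin 2) ℂ := fun p q =>
  (if p = 0 then 1 else star z) * (if q = 0 then 1 else z)

lemma sig_posSemidef (z : ℂ) : (sig z).PosSemidef := by
  have : sig z = (Matrix.of (fun (_ : Fin 1) (q : Fin 2) => if q = 0 then (1:ℂ) else z))ᴴ *
      (Matrix.of fun (_ : Fin 1) (q : Fin 2) => if q = 0 then (1:ℂ) else z) := by
    ext p q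
    simp [sig, Matrix.mul_apply, Matrix.conjTranspose_apply, apply_ite star]
  rw [this]
  exact posSemidef_conjTranspose_mul_self _

def e11 : Matrix (Fin 2) (Fin 2) ℂ := Matrix.diagonal (fun p => if p = 0 then 0 else 1)

lemma e11_posSemidef : e11.PosSemidef := by
  refine posSemidef_diagonal_iff.mpr fun i => ?_
  split <;> simp

lemma sepState_of_fintype {n : Type*} [Fintype n] {ι : Type*} [Fintype ι]
    {ρ : Matrix (Fin 2 × n) (Fin 2 × n) ℂ} (σ : ι → Matrix (Fin 2) (Fin 2) ℂ)
    (P : ι → Matrix n n ℂ) (hσ : ∀ i, (σ i).PosSemidef) (hP : ∀ i, (P i).PosSemidef)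
    (hρ : ρ = ∑ i, σ i ⊗ₖ P i) : SepState ρ := by
  refine ⟨Fintype.card ι, σ ∘ (Fintype.equivFin ι).symm, P ∘ (Fintype.equivFin ι).symm,
    fun i => hσ _, fun i => hP _, ?_⟩
  rw [hρ, ← Equiv.sum_comp (Fintype.equivFin ι).symm (fun i => σ i ⊗ₖ P i)]
  rfl

end Aux

theorem stmt4 {d : ℕ} (X₁ X₂ S : Matrix (Fin d) (Fin d) ℂ) (hX : IsUnit X₁)
    (h : X₁ᴴ * Sᴴ * S * X₁ = X₁ᴴ * S * Sᴴ * X₁) :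
    SepState (blk (X₁ᴴ * X₁) (X₁ᴴ * S * X₁) (X₁ᴴ * Sᴴ * X₁)
      (X₁ᴴ * Sᴴ * S * X₁ + X₂ᴴ * X₂)) := by
  classical
  have hdet : IsUnit X₁.det := (Matrix.isUnit_iff_isUnit_det X₁).mp hX
  have hinv : X₁ * X₁⁻¹ = 1 := Matrix.mul_nonsing_inv X₁ hdet
  have hconj : (X₁⁻¹)ᴴ * X₁ᴴ = 1 := by rw [← conjTranspose_mul, hinv, conjTranspose_one]
  have key : ∀ A : Matrix (Fin d) (Fin d) ℂ, (X₁⁻¹)ᴴ * (X₁ᴴ * A * X₁) * X₁⁻¹ = A := by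
    intro A
    calc (X₁⁻¹)ᴴ * (X₁ᴴ * A * X₁) * X₁⁻¹ = ((X₁⁻¹)ᴴ * X₁ᴴ) * (A * (X₁ * X₁⁻¹)) := by
          simp only [Matrix.mul_assoc]
      _ = A := by rw [hconj, hinv, one_mul, mul_one]
  have hS : Sᴴ * S = S * Sᴴ := by
    have h' : X₁ᴴ * (Sᴴ * S) * X₁ = X₁ᴴ * (S * Sᴴ) * X₁ := by
      simpa only [Matrix.mul_assoc] using h
    calc Sᴴ * S = (X₁⁻¹)ᴴ * (X₁ᴴ * (Sᴴ * S) * X₁) * X₁⁻¹ := (key _).symm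
      _ = (X₁⁻¹)ᴴ * (X₁ᴴ * (S * Sᴴ) * X₁) * X₁⁻¹ := by rw [h']
      _ = S * Sᴴ := key _
  -- Hermitian and anti-Hermitian parts
  set H : Matrix (Fin d) (Fin d) ℂ := ((2:ℂ)⁻¹) • (S + Sᴴ) with hHdef
  set K : Matrix (Fin d) (Fin d) ℂ := (Complex.I * (2:ℂ)⁻¹) • (Sᴴ - S) with hKdef
  have hH : H.IsHermitian := by
    simp [Matrix.IsHermitian, hHdef, conjTranspose_smul, conjTranspose_add, add_comm]
  have hK : K.IsHermitian := by
    simp [Matrix.IsHermitian, hKdef, conjTranspose_smul, conjTranspose_sub, Complex.star_def,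
      _root_.map_mul, Complex.conj_I, neg_smul, neg_sub, smul_sub, neg_add_eq_sub]
  have hSHK : S = H + Complex.I • K := by
    rw [hHdef, hKdef, smul_smul]
    have hc : Complex.I * (Complex.I * (2:ℂ)⁻¹) = -(2:ℂ)⁻¹ := by
      rw [← mul_assoc, Complex.I_mul_I]; ring
    rw [hc]
    module
  have hSH : Sᴴ = H - Complex.I • K := by
    conv_lhs => rw [hSHK]
    rw [conjTranspose_add, hH.eq, conjTranspose_smul, hK.eq, Complex.star_def, Complex.conj_I,
      neg_smul, ← sub_eq_add_neg]
  have hHKcomm : H * K = K * H := by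
    have base : (S + Sᴴ) * (Sᴴ - S) = (Sᴴ - S) * (S + Sᴴ) := by
      simp only [add_mul, mul_add, sub_mul, mul_sub, hS]
      abel
    rw [hHdef, hKdef, smul_mul_assoc, mul_smul_comm, smul_smul, base,
      smul_mul_assoc, mul_smul_comm, smul_smul, mul_comm (Complex.I * (2:ℂ)⁻¹)]
  clear_value H K
  -- spectral data for H
  set U : Matrix (Fin d) (Fin d) ℂ := (hH.eigenvectorUnitary : Matrix (Fin d) (Fin d) ℂ)
    with hUdef
  have hU1 : U * star U = 1 := (Matrix.mem_unitaryGroup_iff).mp hH.eigenvectorUnitary.2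
  have hU2 : star U * U = 1 := (Matrix.mem_unitaryGroup_iff').mp hH.eigenvectorUnitary.2
  set D₁ : Matrix (Fin d) (Fin d) ℂ :=
    Matrix.diagonal (RCLike.ofReal ∘ hH.eigenvalues) with hD₁def
  have hUdiag : star U * H * U = D₁ := by
    have := hH.conjStarAlgAut_star_eigenvectorUnitary
    simpa [hUdef, hD₁def] using this
  set K' : Matrix (Fin d) (Fin d) ℂ := star U * K * U with hK'def
  have hK' : K'.IsHermitian := by
    rw [hK'def, Matrix.star_eq_conjTranspose]
    exact isHermitian_conjTranspose_mul_mul U hK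
  clear_value U K'
  have mulcong : ∀ A B : Matrix (Fin d) (Fin d) ℂ,
      star U * (A * B) * U = (star U * A * U) * (star U * B * U) := by
    intro A B
    calc star U * (A * B) * U = star U * (A * ((U * star U) * B)) * U := by rw [hU1, one_mul]
      _ = (star U * A * U) * (star U * B * U) := by simp only [Matrix.mul_assoc]
  have hDK' : D₁ * K' = K' * D₁ := by
    calc D₁ * K' = star U * (H * K) * U := by rw [mulcong, hUdiag, hK'def]
      _ = star U * (K * H) * U := by rw [hHKcomm]
      _ = K' * D₁ := by rw [mulcong, hUdiag, hK'def]
  have hSU : star U * S * U = D₁ + Complex.I • K' := by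
    conv_lhs => rw [hSHK]
    rw [Matrix.mul_add, Matrix.add_mul, mul_smul_comm, smul_mul_assoc, hUdiag, hK'def]
  have hSHU : star U * Sᴴ * U = D₁ - Complex.I • K' := by
    conv_lhs => rw [hSH]
    rw [Matrix.mul_sub, Matrix.sub_mul, mul_smul_comm, smul_mul_assoc, hUdiag, hK'def]
  have hSSU : star U * (Sᴴ * S) * U = D₁ * D₁ + K' * K' := by
    rw [mulcong, hSU, hSHU]
    have hIK : Complex.I • K' * (Complex.I • K') = -(K' * K') := by
      rw [smul_mul_assoc, mul_smul_comm, smul_smul, Complex.I_mul_I, neg_one_smul]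
    calc (D₁ - Complex.I • K') * (D₁ + Complex.I • K')
        = D₁ * D₁ + D₁ * (Complex.I • K') - ((Complex.I • K') * D₁
            + (Complex.I • K') * (Complex.I • K')) := by
          rw [Matrix.sub_mul, Matrix.mul_add, Matrix.mul_add]
      _ = D₁ * D₁ + K' * K' := by
          rw [hIK, mul_smul_comm, smul_mul_assoc, hDK']; abel
  -- spectral data for K'
  set V : Matrix (Fin d) (Fin d) ℂ := (hK'.eigenvectorUnitary : Matrix (Fin d) (Fin d) ℂ)
    with hVdef
  have hV1 : V * star V = 1 := (Matrix.mem_unitaryGroup_iff).mp hK'.eigenvectorUnitary.2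
  have hV2 : star V * V = 1 := (Matrix.mem_unitaryGroup_iff').mp hK'.eigenvectorUnitary.2
  set e₁ : Fin d → ℝ := hH.eigenvalues with he₁def
  set e₂ : Fin d → ℝ := hK'.eigenvalues with he₂def
  have hKspec : K' = V * Matrix.diagonal (RCLike.ofReal ∘ e₂) * star V := hK'.spectral_theorem
  clear_value V e₁ e₂
  set μ : Fin d → ℂ := fun k => (RCLike.ofReal (e₁ k) : ℂ) with hμdef
  set ν : Fin d → ℂ := fun j => (RCLike.ofReal (e₂ j) : ℂ) with hνdef
  have hD₁' : D₁ = Matrix.diagonal μ := hD₁def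
  -- representatives of eigenvalue classes
  have hmem : ∀ i : Fin d, i ∈ univ.filter (fun l => e₁ l = e₁ i) := by
    intro i; simp
  set c : Fin d → Fin d := fun i => (univ.filter (fun l => e₁ l = e₁ i)).min' ⟨i, hmem i⟩
    with hcdef
  have hc1 : ∀ i, e₁ (c i) = e₁ i := by
    intro i
    have := Finset.min'_mem (univ.filter (fun l => e₁ l = e₁ i)) ⟨i, hmem i⟩
    exact (Finset.mem_filter.mp this).2
  have hc2 : ∀ i j, e₁ i = e₁ j → c i = c j := by
    intro i j hij
    have hsets : (univ.filter (fun l => e₁ l = e₁ i)) = (univ.filter (fun l => e₁ l = e₁ j)) := by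
      rw [hij]
    simp only [hcdef, hsets]
  set Pk : Fin d → Matrix (Fin d) (Fin d) ℂ :=
    fun k => Matrix.diagonal (fun i => if c i = k then 1 else 0) with hPkdef
  set qj : Fin d → Matrix (Fin d) (Fin d) ℂ :=
    fun j => V * Matrix.diagonal (Pi.single j 1) * star V with hqjdef
  clear_value c
  have hPsum : ∑ k, Pk k = 1 := by
    ext i j
    rw [Matrix.sum_apply]
    simp only [hPkdef, Matrix.diagonal_apply, Matrix.one_apply]
    by_cases hij : i = j
    · subst hij; simp
    · simp [hij]
  have hPmu : ∑ k, μ k • Pk k = D₁ := by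
    rw [hD₁']
    ext i j
    rw [Matrix.sum_apply]
    simp only [hPkdef, Matrix.smul_apply, Matrix.diagonal_apply, smul_eq_mul]
    by_cases hij : i = j
    · subst hij
      simp only [if_true, mul_ite, mul_one, mul_zero, Finset.sum_ite_eq]
      simp [hμdef, hc1]
    · simp [hij]
  have hPmu2 : ∑ k, (μ k * μ k) • Pk k = D₁ * D₁ := by
    rw [hD₁', Matrix.diagonal_mul_diagonal]
    ext i j
    rw [Matrix.sum_apply]
    simp only [hPkdef, Matrix.smul_apply, Matrix.diagonal_apply, smul_eq_mul]
    by_cases hij : i = j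
    · subst hij
      simp only [if_true, mul_ite, mul_one, mul_zero, Finset.sum_ite_eq]
      simp [hμdef, hc1]
    · simp [hij]
  have hPidem : ∀ k, Pk k * Pk k = Pk k := by
    intro k
    ext i j
    simp only [hPkdef, Matrix.diagonal_mul_diagonal, Matrix.diagonal_apply]
    split_ifs <;> simp
  have hPherm : ∀ k, (Pk k)ᴴ = Pk k := by
    intro k
    ext i j
    simp only [hPkdef, Matrix.diagonal_conjTranspose, Matrix.diagonal_apply, Pi.star_apply]
    split_ifs <;> simp
  have hKod : ∀ i j, K' i j ≠ 0 → e₁ i = e₁ j := by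
    intro i j hne
    have hent := congrFun (congrFun hDK' i) j
    rw [hD₁'] at hent
    rw [Matrix.diagonal_mul, Matrix.mul_diagonal] at hent
    have h0 : (μ i - μ j) * K' i j = 0 := by
      rw [sub_mul, hent]; ring
    rcases mul_eq_zero.mp h0 with h1 | h1
    · have := sub_eq_zero.mp h1
      simp only [hμdef, RCLike.ofReal_inj] at this
      exact this
    · exact absurd h1 hne
  have hPK : ∀ k, Pk k * K' = K' * Pk k := by
    intro k
    ext i j
    simp only [hPkdef, Matrix.diagonal_mul, Matrix.mul_diagonal]
    by_cases hne : K' i j = 0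
    · simp [hne]
    · rw [hc2 i j (hKod i j hne)]
      ring
  have hPK2 : ∀ k, Pk k * (K' * K') = K' * K' * Pk k := by
    intro k
    calc Pk k * (K' * K') = (Pk k * K') * K' := by rw [mul_assoc]
      _ = (K' * Pk k) * K' := by rw [hPK]
      _ = K' * (Pk k * K') := by rw [mul_assoc]
      _ = K' * (K' * Pk k) := by rw [hPK]
      _ = K' * K' * Pk k := by rw [mul_assoc]
  have hdiagsum : ∑ j, Matrix.diagonal (Pi.single j (1:ℂ)) = (1 : Matrix (Fin d) (Fin d) ℂ) := by
    ext i l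
    rw [Matrix.sum_apply]
    simp only [Matrix.diagonal_apply, Matrix.one_apply, Pi.single_apply]
    by_cases hil : i = l
    · subst hil; simp
    · simp [hil]
  have hqsum : ∑ j, qj j = 1 := by
    simp only [hqjdef]
    rw [← Finset.sum_mul, ← Matrix.mul_sum, hdiagsum, mul_one, hV1]
  have hnusum : ∀ f : Fin d → ℂ,
      ∑ j, f j • qj j = V * Matrix.diagonal f * star V := by
    intro f
    have step : ∀ j, f j • qj j = V * (f j • Matrix.diagonal (Pi.single j 1)) * star V := by
      intro j
      simp only [hqjdef, smul_mul_assoc, mul_smul_comm]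
    rw [Finset.sum_congr rfl (fun j _ => step j), ← Finset.sum_mul, ← Matrix.mul_sum]
    congr 2
    ext i l
    rw [Matrix.sum_apply]
    simp only [Matrix.smul_apply, Matrix.diagonal_apply, Pi.single_apply, smul_eq_mul]
    by_cases hil : i = l
    · subst hil; simp
    · simp [hil]
  have hqnu : ∑ j, ν j • qj j = K' := by
    rw [hnusum ν, hKspec]
    congr 2
  have hqnu2 : ∑ j, (ν j * ν j) • qj j = K' * K' := by
    rw [hnusum (fun j => ν j * ν j), hKspec]
    calc V * Matrix.diagonal (fun j => ν j * ν j) * star V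
        = V * (Matrix.diagonal ν * Matrix.diagonal ν) * star V := by
          rw [Matrix.diagonal_mul_diagonal]
      _ = (V * Matrix.diagonal ν * star V) * (V * Matrix.diagonal ν * star V) := by
          rw [show V * Matrix.diagonal ν * star V * (V * Matrix.diagonal ν * star V)
              = V * (Matrix.diagonal ν * ((star V * V) * Matrix.diagonal ν)) * star V by
            simp only [Matrix.mul_assoc], hV2, one_mul]
      _ = (V * Matrix.diagonal (RCLike.ofReal ∘ e₂) * star V) *
            (V * Matrix.diagonal (RCLike.ofReal ∘ e₂) * star V) := by rfl
  have hqpsd : ∀ j, (qj j).PosSemidef := by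
    intro j
    have hdiagpsd : (Matrix.diagonal (Pi.single j (1:ℂ))).PosSemidef := by
      refine posSemidef_diagonal_iff.mpr fun i => ?_
      rw [Pi.single_apply]
      split <;> simp
    have := hdiagpsd.mul_mul_conjTranspose_same V
    rw [← Matrix.star_eq_conjTranspose] at this
    rw [hqjdef]
    exact this
  -- core pieces
  set T : Fin d × Fin d → Matrix (Fin d) (Fin d) ℂ :=
    fun x => Pk x.1 * qj x.2 * Pk x.1 with hTdef
  have hTsum1 : ∀ k, ∑ j, Pk k * qj j * Pk k = Pk k := by
    intro k
    rw [← Finset.sum_mul, ← Matrix.mul_sum, hqsum, mul_one, hPidem]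
  have hTsumnu : ∀ k, ∑ j, ν j • (Pk k * qj j * Pk k) = Pk k * K' := by
    intro k
    have step : ∀ j, ν j • (Pk k * qj j * Pk k) = Pk k * (ν j • qj j) * Pk k := by
      intro j; simp only [smul_mul_assoc, mul_smul_comm]
    rw [Finset.sum_congr rfl (fun j _ => step j), ← Finset.sum_mul, ← Matrix.mul_sum, hqnu]
    calc Pk k * K' * Pk k = Pk k * (K' * Pk k) := by rw [mul_assoc]
      _ = Pk k * (Pk k * K') := by rw [hPK]
      _ = (Pk k * Pk k) * K' := by rw [mul_assoc]
      _ = Pk k * K' := by rw [hPidem]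
  have hTsumnu2 : ∀ k, ∑ j, (ν j * ν j) • (Pk k * qj j * Pk k) = Pk k * (K' * K') := by
    intro k
    have step : ∀ j, (ν j * ν j) • (Pk k * qj j * Pk k)
        = Pk k * ((ν j * ν j) • qj j) * Pk k := by
      intro j; simp only [smul_mul_assoc, mul_smul_comm]
    rw [Finset.sum_congr rfl (fun j _ => step j), ← Finset.sum_mul, ← Matrix.mul_sum, hqnu2]
    calc Pk k * (K' * K') * Pk k = Pk k * ((K' * K') * Pk k) := by rw [mul_assoc]
      _ = Pk k * (Pk k * (K' * K')) := by rw [hPK2]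
      _ = (Pk k * Pk k) * (K' * K') := by rw [mul_assoc]
      _ = Pk k * (K' * K') := by rw [hPidem]
  have core1 : ∑ x : Fin d × Fin d, T x = 1 := by
    rw [Fintype.sum_prod_type]
    simp only [hTdef]
    rw [Finset.sum_congr rfl (fun k _ => hTsum1 k), hPsum]
  set lam : Fin d × Fin d → ℂ := fun x => μ x.1 + Complex.I * ν x.2 with hlamdef
  have core2 : ∑ x : Fin d × Fin d, lam x • T x = D₁ + Complex.I • K' := by
    rw [Fintype.sum_prod_type]
    have inner : ∀ k, ∑ j, lam (k, j) • T (k, j) = μ k • Pk k + Complex.I • (Pk k * K') := by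
      intro k
      have step : ∀ j, lam (k, j) • T (k, j)
          = μ k • (Pk k * qj j * Pk k) + Complex.I • (ν j • (Pk k * qj j * Pk k)) := by
        intro j
        simp only [hlamdef, hTdef, add_smul, mul_smul]
      rw [Finset.sum_congr rfl (fun j _ => step j), Finset.sum_add_distrib, ← Finset.smul_sum,
        ← Finset.smul_sum, hTsum1, hTsumnu]
    rw [Finset.sum_congr rfl (fun k _ => inner k), Finset.sum_add_distrib, hPmu,
      ← Finset.smul_sum, ← Finset.sum_mul, hPsum, one_mul]
  have hstar : ∀ x : Fin d × Fin d, star (lam x) = μ x.1 - Complex.I * ν x.2 := by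
    intro x
    simp only [hlamdef, hμdef, hνdef, Complex.star_def, map_add, _root_.map_mul, Complex.conj_I,
      Complex.conj_ofReal, RCLike.conj_ofReal]
    ring
  have core3 : ∑ x : Fin d × Fin d, star (lam x) • T x = D₁ - Complex.I • K' := by
    rw [Fintype.sum_prod_type]
    have inner : ∀ k, ∑ j, star (lam (k, j)) • T (k, j)
        = μ k • Pk k - Complex.I • (Pk k * K') := by
      intro k
      have step : ∀ j, star (lam (k, j)) • T (k, j)
          = μ k • (Pk k * qj j * Pk k) - Complex.I • (ν j • (Pk k * qj j * Pk k)) := by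
        intro j
        rw [hstar]
        simp only [hTdef, sub_smul, mul_smul]
      rw [Finset.sum_congr rfl (fun j _ => step j), Finset.sum_sub_distrib, ← Finset.smul_sum,
        ← Finset.smul_sum, hTsum1, hTsumnu]
    rw [Finset.sum_congr rfl (fun k _ => inner k), Finset.sum_sub_distrib, hPmu,
      ← Finset.smul_sum, ← Finset.sum_mul, hPsum, one_mul]
  have hsq : ∀ x : Fin d × Fin d, star (lam x) * lam x = μ x.1 * μ x.1 + ν x.2 * ν x.2 := by
    intro x
    rw [hstar]
    simp only [hlamdef]
    linear_combination (-(ν x.2 * ν x.2)) * Complex.I_mul_I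
  have core4 : ∑ x : Fin d × Fin d, (star (lam x) * lam x) • T x = D₁ * D₁ + K' * K' := by
    rw [Fintype.sum_prod_type]
    have inner : ∀ k, ∑ j, (star (lam (k, j)) * lam (k, j)) • T (k, j)
        = (μ k * μ k) • Pk k + Pk k * (K' * K') := by
      intro k
      have step : ∀ j, (star (lam (k, j)) * lam (k, j)) • T (k, j)
          = (μ k * μ k) • (Pk k * qj j * Pk k) + (ν j * ν j) • (Pk k * qj j * Pk k) := by
        intro j
        rw [hsq]
        simp only [hTdef, add_smul]
      rw [Finset.sum_congr rfl (fun j _ => step j), Finset.sum_add_distrib, ← Finset.smul_sum,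
        hTsum1, hTsumnu2]
    rw [Finset.sum_congr rfl (fun k _ => inner k), Finset.sum_add_distrib, hPmu2,
      ← Finset.sum_mul, hPsum, one_mul]
  -- transfer to the original frame
  set B : Matrix (Fin d) (Fin d) ℂ := star U * X₁ with hBdef
  have hBH : Bᴴ = X₁ᴴ * U := by
    rw [hBdef, conjTranspose_mul, Matrix.star_eq_conjTranspose, conjTranspose_conjTranspose]
  set Pm : Fin d × Fin d → Matrix (Fin d) (Fin d) ℂ := fun x => Bᴴ * T x * B with hPmdef
  have hPmpsd : ∀ x, (Pm x).PosSemidef := by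
    intro x
    have hTpsd : (T x).PosSemidef := by
      have := (hqpsd x.2).conjTranspose_mul_mul_same (Pk x.1)
      rw [hPherm] at this
      rw [hTdef]
      exact this
    rw [hPmdef]
    exact hTpsd.conjTranspose_mul_mul_same B
  have transfer : ∀ f : Fin d × Fin d → ℂ, ∑ x, f x • Pm x = Bᴴ * (∑ x, f x • T x) * B := by
    intro f
    rw [Matrix.mul_sum, Finset.sum_mul]
    exact Finset.sum_congr rfl fun x _ => by simp only [hPmdef, mul_smul_comm, smul_mul_assoc]
  have frame : ∀ N : Matrix (Fin d) (Fin d) ℂ,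
      Bᴴ * N * B = X₁ᴴ * (U * N * star U) * X₁ := by
    intro N
    rw [hBH, hBdef]
    simp only [Matrix.mul_assoc]
  have recov : ∀ M N : Matrix (Fin d) (Fin d) ℂ, star U * M * U = N → M = U * N * star U := by
    intro M N hMN
    rw [← hMN]
    calc M = (U * star U) * M * (U * star U) := by rw [hU1, one_mul, mul_one]
      _ = U * (star U * M * U) * star U := by simp only [Matrix.mul_assoc]
  have hB1 : X₁ᴴ * X₁ = ∑ x, Pm x := by
    have t := transfer (fun _ => (1:ℂ))
    simp only [one_smul] at t
    rw [t, core1, frame, mul_one, hU1, mul_one]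
  have hB2 : X₁ᴴ * S * X₁ = ∑ x, lam x • Pm x := by
    have hSrec := recov _ _ hSU
    rw [transfer, core2, frame, ← hSrec]
  have hB3 : X₁ᴴ * Sᴴ * X₁ = ∑ x, star (lam x) • Pm x := by
    have hSHrec := recov _ _ hSHU
    rw [transfer, core3, frame, ← hSHrec]
  have hB4 : X₁ᴴ * Sᴴ * S * X₁ = ∑ x, (star (lam x) * lam x) • Pm x := by
    have hSSrec := recov _ _ hSSU
    rw [transfer, core4, frame, ← hSSrec]
    simp only [Matrix.mul_assoc]
  -- assembly
  refine sepState_of_fintype (ι := (Fin d × Fin d) ⊕ Fin 1)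
    (Sum.elim (fun x => sig (lam x)) (fun _ => e11))
    (Sum.elim Pm (fun _ => X₂ᴴ * X₂)) ?_ ?_ ?_
  · rintro (x | x)
    · exact sig_posSemidef _
    · exact e11_posSemidef
  · rintro (x | x)
    · exact hPmpsd x
    · exact posSemidef_conjTranspose_mul_self X₂
  · rw [Fintype.sum_sum_type, Fin.sum_univ_one]
    simp only [Sum.elim_inl, Sum.elim_inr]
    ext ⟨p, a⟩ ⟨q, b⟩
    rw [Matrix.add_apply, Matrix.sum_apply]
    fin_cases p <;> fin_cases q <;>
      simp [blk, sig, e11, kroneckerMap_apply, Matrix.sum_apply, Matrix.smul_apply,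
        Matrix.diagonal_apply, Matrix.add_apply, hB1, hB2, hB3, hB4, smul_eq_mul]
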